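/- arXiv:1907.11391 — 2 statements merged into one kernel-verified Lean document; each statement's English description precedes it below -/
import Mathlib

section
/- Let X be a real random variable with mean μ and variance σ², and let M ≥ 0 satisfy P(X - μ ≥ M) ≤ ε/2 for some ε ∈ (0,1). Then E[(X - μ - M)·1_{X - μ ≥ M}] ≤ σ√(8ε). -/
open MeasureTheory ProbabilityTheory

theorem stmt1 {Ω : Type*} [MeasurableSpace Ω] (P : Measure Ω) [IsProbabilityMeasure P]
    (X : Ω → ℝ) (hX : MemLp X 2 P) (μ σ ε M : ℝ)
    (hμ : μ = ∫ ω, X ω ∂P)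
    (hσ : σ ^ 2 = variance X P) (hσ0 : 0 ≤ σ)
    (hε : ε ∈ Set.Ioo (0 : ℝ) 1) (hM0 : 0 ≤ M)
    (hM : (P {ω | M ≤ X ω - μ}).toReal ≤ ε / 2) :
    ∫ ω in {ω | M ≤ X ω - μ}, (X ω - μ - M) ∂P ≤ σ * Real.sqrt (8 * ε) := by
  set A : Set Ω := {ω | M ≤ X ω - μ} with hA
  set f : Ω → ℝ := fun ω => X ω - μ with hf
  have hf2 : MemLp f 2 P := hX.sub (memLp_const μ)
  have hf2r : MemLp f 2 (P.restrict A) := hf2.restrict A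
  have hfint : Integrable f (P.restrict A) :=
    (hf2.integrable one_le_two).restrict
  have hεpos : 0 < ε := hε.1
  -- Step 1: drop M
  have step1 : ∫ ω in A, (X ω - μ - M) ∂P ≤ ∫ ω in A, f ω ∂P := by
    apply integral_mono (hfint.sub (integrable_const M)) hfint
    intro ω
    simp [hf, hM0]
  -- Step 2: Cauchy-Schwarz on restricted measure
  have habs : MemLp (fun ω => |f ω|) 2 (P.restrict A) := by
    simpa [Real.norm_eq_abs] using hf2r.norm
  have hone : MemLp (fun _ : Ω => (1 : ℝ)) 2 (P.restrict A) := memLp_const 1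
  have h2two : ENNReal.ofReal (2:ℝ) = 2 := by norm_num
  have hCS := integral_mul_le_Lp_mul_Lq_of_nonneg
    (Real.HolderConjugate.two_two : Real.HolderConjugate 2 2)
    (ae_of_all _ (fun ω => abs_nonneg (f ω)))
    (ae_of_all _ (fun _ : Ω => (zero_le_one : (0:ℝ) ≤ 1)))
    (h2two ▸ habs) (h2two ▸ hone)
  have h1 : ∫ a, |f a| * 1 ∂(P.restrict A) = ∫ ω in A, |f ω| ∂P := by simp
  have h2 : ∫ a : Ω, (1:ℝ) ^ (2:ℝ) ∂(P.restrict A) = (P A).toReal := by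
    simp [Measure.restrict_apply_univ, Measure.real]
  rw [h1, h2] at hCS
  have step2 : ∫ ω in A, f ω ∂P ≤ ∫ ω in A, |f ω| ∂P :=
    integral_mono hfint hfint.abs (fun ω => le_abs_self _)
  -- bound the two factors
  have hsqint : Integrable (fun ω => f ω ^ 2) P := by
    have := hf2.integrable_norm_rpow two_ne_zero ENNReal.ofNat_ne_top
    simpa [Real.rpow_natCast, Real.norm_eq_abs, sq_abs] using
      (by simpa [ENNReal.toReal_ofNat, Real.rpow_two, Real.norm_eq_abs, sq_abs] using this :
        Integrable (fun ω => |f ω| ^ (2:ℝ)) P).congr (ae_of_all _ <| fun ω => by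
          simp only [Real.rpow_two, sq_abs])
  have hvar : ∫ ω, f ω ^ 2 ∂P = σ ^ 2 := by
    rw [hσ, variance_eq_integral hX.aestronglyMeasurable.aemeasurable, ← hμ]
  have hfA : ∫ a, |f a| ^ (2:ℝ) ∂(P.restrict A) ≤ σ ^ 2 := by
    have heq : ∫ a, |f a| ^ (2:ℝ) ∂(P.restrict A) = ∫ a in A, f a ^ 2 ∂P := by
      apply integral_congr_ae
      filter_upwards with a
      simp only [Real.rpow_two, sq_abs]
    rw [heq, ← hvar]
    exact setIntegral_le_integral hsqint (ae_of_all _ <| fun ω => sq_nonneg _)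
  have hfA0 : 0 ≤ ∫ a, |f a| ^ (2:ℝ) ∂(P.restrict A) :=
    integral_nonneg fun a => Real.rpow_nonneg (abs_nonneg _) _
  have hfac1 : (∫ a, |f a| ^ (2:ℝ) ∂(P.restrict A)) ^ (1/(2:ℝ)) ≤ σ := by
    calc (∫ a, |f a| ^ (2:ℝ) ∂(P.restrict A)) ^ (1/(2:ℝ))
        ≤ (σ ^ 2) ^ (1/(2:ℝ)) := Real.rpow_le_rpow hfA0 hfA (by norm_num)
      _ = σ := by
          rw [← Real.rpow_natCast σ 2, ← Real.rpow_mul hσ0]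
          norm_num
  have hfac2 : (P A).toReal ^ (1/(2:ℝ)) ≤ Real.sqrt (8 * ε) := by
    rw [← Real.sqrt_eq_rpow]
    apply Real.sqrt_le_sqrt
    calc (P A).toReal ≤ ε / 2 := hM
      _ ≤ 8 * ε := by linarith
  calc ∫ ω in A, (X ω - μ - M) ∂P ≤ ∫ ω in A, f ω ∂P := step1
    _ ≤ ∫ ω in A, |f ω| ∂P := step2
    _ ≤ (∫ a, |f a| ^ (2:ℝ) ∂(P.restrict A)) ^ (1/(2:ℝ)) * (P A).toReal ^ (1/(2:ℝ)) := hCS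
    _ ≤ σ * Real.sqrt (8 * ε) := by
        apply mul_le_mul hfac1 hfac2 (Real.rpow_nonneg ENNReal.toReal_nonneg _)
        exact hσ0
end

section
/- Let X be a real random variable with mean μ and variance σ², and let M satisfy P(X - μ ≥ M) ≤ ε/2 with |M| ≤ σ√(2/ε). Then E[|X - μ|·1_{X - μ ≥ M}] ≤ σ√(ε/2) + σ√(2ε) ≤ σ√(8ε). In particular the quantity E(ε,X) := max(E[|X-μ|·1_{X-μ ≤ Q_{ε/2}}], E[|X-μ|·1_{X-μ ≥ Q_{1-ε/2}}]) satisfies E(ε,X) ≤ σ√(8ε), where Q_p denotes the p-quantile of X - μ. -/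
open MeasureTheory ProbabilityTheory

private lemma cs_set_bound {Ω : Type*} [MeasurableSpace Ω] (P : Measure Ω)
    [IsProbabilityMeasure P]
    (Y : Ω → ℝ) (hY : MemLp Y 2 P) (σ : ℝ) (hσ0 : 0 ≤ σ)
    (hvar : ∫ ω, (Y ω)^2 ∂P ≤ σ^2) (A : Set Ω) :
    ∫ ω in A, |Y ω| ∂P ≤ σ * Real.sqrt (P A).toReal := by
  have h2 : (2:ℝ).HolderConjugate 2 := by
    constructor <;> norm_num
  have hYr : MemLp (fun ω => |Y ω|) (ENNReal.ofReal 2) (P.restrict A) := by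
    rw [show ENNReal.ofReal 2 = 2 by simp]; exact (hY.restrict A).abs
  have h1 : MemLp (fun _ : Ω => (1:ℝ)) (ENNReal.ofReal 2) (P.restrict A) := by
    simpa using (memLp_const (1:ℝ) : MemLp _ 2 (P.restrict A))
  have key := integral_mul_le_Lp_mul_Lq_of_nonneg h2
    (ae_of_all _ fun ω => abs_nonneg (Y ω)) (ae_of_all _ fun _ => zero_le_one) hYr h1
  simp only [mul_one, one_pow] at key
  simp only [Real.rpow_two, sq_abs, one_pow, integral_const, Measure.restrict_apply_univ,
    smul_eq_mul, mul_one] at key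
  have hsq : ∫ ω in A, (Y ω) ^ 2 ∂P ≤ σ ^ 2 :=
    le_trans (setIntegral_le_integral hY.integrable_sq
      (ae_of_all _ fun ω => sq_nonneg _)) hvar
  refine key.trans ?_
  have hx : (∫ ω in A, (Y ω) ^ 2 ∂P) ^ ((1:ℝ)/2) ≤ σ := by
    calc (∫ ω in A, (Y ω) ^ 2 ∂P) ^ ((1:ℝ)/2)
        ≤ (σ ^ (2:ℕ)) ^ ((1:ℝ)/2) := by
          apply Real.rpow_le_rpow (by positivity) hsq (by norm_num)
      _ = σ := by
          rw [← Real.rpow_natCast σ 2, ← Real.rpow_mul hσ0]; norm_num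
  have hy : ((P A).toReal) ^ ((1:ℝ)/2) = Real.sqrt (P A).toReal := by
    rw [Real.sqrt_eq_rpow]
  rw [measureReal_restrict_apply_univ, measureReal_def, hy]
  exact mul_le_mul_of_nonneg_right hx (Real.sqrt_nonneg _)

theorem stmt2 {Ω : Type*} [MeasurableSpace Ω] (P : Measure Ω) [IsProbabilityMeasure P]
    (X : Ω → ℝ) (hX : MemLp X 2 P) (μ σ ε M Qa Qb : ℝ)
    (hμ : μ = ∫ ω, X ω ∂P)
    (hσ : σ ^ 2 = variance X P) (hσ0 : 0 ≤ σ)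
    (hε : ε ∈ Set.Ioo (0 : ℝ) 1)
    (hM : (P {ω | M ≤ X ω - μ}).toReal ≤ ε / 2)
    (hMabs : |M| ≤ σ * Real.sqrt (2 / ε))
    -- Qa is the (ε/2)-quantile and Qb the (1-ε/2)-quantile of X - μ
    -- (absolute continuity ensures the quantile events have exact probability ε/2)
    (hQa : (P {ω | X ω - μ ≤ Qa}).toReal = ε / 2)
    (hQb : (P {ω | Qb ≤ X ω - μ}).toReal = ε / 2) :
    (∫ ω in {ω | M ≤ X ω - μ}, |X ω - μ| ∂P ≤
        σ * Real.sqrt (ε / 2) + σ * Real.sqrt (2 * ε)) ∧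
    σ * Real.sqrt (ε / 2) + σ * Real.sqrt (2 * ε) ≤ σ * Real.sqrt (8 * ε) ∧
    max (∫ ω in {ω | X ω - μ ≤ Qa}, |X ω - μ| ∂P)
        (∫ ω in {ω | Qb ≤ X ω - μ}, |X ω - μ| ∂P) ≤ σ * Real.sqrt (8 * ε) := by
  obtain ⟨hε0, hε1⟩ := hε
  have hY : MemLp (fun ω => X ω - μ) 2 P := hX.sub (memLp_const μ)
  have hvar : ∫ ω, (X ω - μ)^2 ∂P ≤ σ^2 := by
    rw [hσ, variance_eq_integral hX.aemeasurable, ← hμ]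
  have key : ∀ A : Set Ω, ∫ ω in A, |X ω - μ| ∂P ≤ σ * Real.sqrt (P A).toReal :=
    cs_set_bound P _ hY σ hσ0 hvar
  -- monotone bounds on the three sets
  have sqrt_mono : ∀ {a b : ℝ}, a ≤ b → Real.sqrt a ≤ Real.sqrt b := fun h => Real.sqrt_le_sqrt h
  have bM : ∫ ω in {ω | M ≤ X ω - μ}, |X ω - μ| ∂P ≤ σ * Real.sqrt (ε / 2) :=
    (key _).trans (mul_le_mul_of_nonneg_left (sqrt_mono hM) hσ0)
  have bQa : ∫ ω in {ω | X ω - μ ≤ Qa}, |X ω - μ| ∂P ≤ σ * Real.sqrt (ε / 2) :=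
    (key _).trans (by rw [hQa])
  have bQb : ∫ ω in {ω | Qb ≤ X ω - μ}, |X ω - μ| ∂P ≤ σ * Real.sqrt (ε / 2) :=
    (key _).trans (by rw [hQb])
  have h8 : Real.sqrt (8 * ε) = 2 * Real.sqrt (2 * ε) := by
    rw [show (8:ℝ) * ε = 2^2 * (2 * ε) by ring, Real.sqrt_mul (by positivity),
      Real.sqrt_sq (by norm_num)]
  have hle : Real.sqrt (ε / 2) ≤ Real.sqrt (2 * ε) := sqrt_mono (by linarith)
  have part2 : σ * Real.sqrt (ε / 2) + σ * Real.sqrt (2 * ε) ≤ σ * Real.sqrt (8 * ε) := by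
    rw [h8]
    have := mul_le_mul_of_nonneg_left hle hσ0
    linarith
  have hsmall : σ * Real.sqrt (ε / 2) ≤ σ * Real.sqrt (8 * ε) :=
    mul_le_mul_of_nonneg_left (sqrt_mono (by linarith)) hσ0
  refine ⟨bM.trans ?_, part2, ?_⟩
  · have : 0 ≤ σ * Real.sqrt (2 * ε) := by positivity
    linarith
  · exact max_le (bQa.trans hsmall) (bQb.trans hsmall)
end
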